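/- Let p be a prime, q = p^n, and m ≥ 2. Then K_p(GL_m(F_q)) = ℚ, i.e. every irreducible complex character of GL_m(F_q) takes rational values at every element of order p. -/

import Mathlib

open CategoryTheory

/-- `zeta N` is the root of unity `e^{2 π i / N}`. -/
noncomputable def zeta (N : ℕ) : ℂ := Complex.exp (2 * Real.pi * Complex.I / N)

/-- `charField G` is the field `K(G)` generated over `ℚ` by all values of
irreducible complex characters of `G`. -/
noncomputable def charField (G : Type) [Group G] : IntermediateField ℚ ℂ :=
  IntermediateField.adjoin ℚ
    {x : ℂ | ∃ V : FDRep ℂ G, Simple V ∧ ∃ g : G, V.character g = x}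

/-- `charFieldAt G d` is the field `K_d(G)` generated over `ℚ` by the values of
irreducible complex characters of `G` at elements of order exactly `d`. -/
noncomputable def charFieldAt (G : Type) [Group G] (d : ℕ) : IntermediateField ℚ ℂ :=
  IntermediateField.adjoin ℚ
    {x : ℂ | ∃ V : FDRep ℂ G, Simple V ∧ ∃ g : G, orderOf g = d ∧ V.character g = x}

set_option synthInstance.maxHeartbeats 1000000
set_option maxHeartbeats 1000000

open Polynomial
open scoped DirectSum

section Helpers

variable {F : Type} [Field F]

lemma qt_smul (j : ℕ) (f : F[X]) (c : F[X] ⧸ Ideal.span {(X:F[X])^j}) :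
    f • c = Ideal.Quotient.mk _ f * c := by
  obtain ⟨g, rfl⟩ := Ideal.Quotient.mk_surjective c
  rw [← Ideal.Quotient.mk_eq_mk, ← Submodule.Quotient.mk_smul, smul_eq_mul,
    Ideal.Quotient.mk_eq_mk, map_mul]
  rfl

lemma cyclic_twist (j : ℕ) (q : F[X]) (h0 : q.coeff 0 = 0) (h1 : q.coeff 1 ≠ 0) :
    ∃ τ : (F[X] ⧸ Ideal.span {(X:F[X])^j}) ≃ₗ[F] (F[X] ⧸ Ideal.span {(X:F[X])^j}),
      ∀ c, τ ((X:F[X]) • c) = q • τ c := by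
  set I : Ideal F[X] := Ideal.span {(X:F[X])^j} with hI
  set mk : F[X] →+* (F[X] ⧸ I) := Ideal.Quotient.mk I with hmk
  haveI : FiniteDimensional F (F[X] ⧸ I) := (AdjoinRoot.powerBasis' (monic_X_pow j)).finite
  have hqu : (X:F[X]) * q.divX = q := by
    conv_rhs => rw [← X_mul_divX_add q, h0, map_zero, add_zero]
  set r : F[X] ⧸ I := mk q with hr
  have hrj : ∀ a : F[X], a ∈ I → (aeval r) a = 0 := by
    intro a ha
    rw [hI, Ideal.mem_span_singleton] at ha
    obtain ⟨b, rfl⟩ := ha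
    rw [map_mul, map_pow, aeval_X]
    have : r ^ j = 0 := by
      rw [hr, ← map_pow, hmk, Ideal.Quotient.eq_zero_iff_mem, hI, Ideal.mem_span_singleton]
      exact pow_dvd_pow_of_dvd ⟨q.divX, hqu.symm⟩ j
    rw [this, zero_mul]
  set E : (F[X] ⧸ I) →ₐ[F] (F[X] ⧸ I) := Ideal.Quotient.liftₐ I (aeval r) hrj with hE
  have E_mk : ∀ f : F[X], E (mk f) = aeval r f := fun f => by
    rw [hE, Ideal.Quotient.liftₐ_apply, hmk]; rfl
  have mk_smul : ∀ (c : F) (f : F[X]), mk (c • f) = c • mk f := fun c f =>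
    map_smul (Ideal.Quotient.mkₐ F I) c f
  set c₁ : F := q.coeff 1 with hc₁
  set u : F[X] := q.divX with hu
  -- key decomposition
  have hdecomp : ∀ t : ℕ, r ^ t = c₁^t • (mk X)^t + (mk X)^(t+1) * mk ((u^t).divX) := by
    intro t
    have hut : (u^t).coeff 0 = c₁^t := by
      rw [coeff_zero_eq_eval_zero, eval_pow, ← coeff_zero_eq_eval_zero, hu, coeff_divX, hc₁]
    have hpoly : q^t = (c₁^t) • (X:F[X])^t + X^(t+1) * (u^t).divX := by
      conv_lhs => rw [← hqu, mul_pow]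
      conv_lhs => rw [show u ^ t = X * (u^t).divX + C ((u^t).coeff 0) from (X_mul_divX_add _).symm]
      rw [hut, smul_eq_C_mul]
      ring
    rw [hr, ← map_pow, hpoly, map_add, map_mul, mk_smul, map_pow, map_pow]
  have hrT : r ∈ E.range := by
    rw [AlgHom.mem_range]
    exact ⟨mk X, by rw [E_mk, aeval_X]⟩
  -- surjectivity claim
  have key : ∀ t : ℕ, (Subalgebra.toSubmodule E.range) ⊔
      (Ideal.span {(mk X)^t}).restrictScalars F = ⊤ := by
    intro t
    induction t with
    | zero =>
      rw [eq_top_iff]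
      intro z _
      apply Submodule.mem_sup_right
      rw [pow_zero, Ideal.span_singleton_one]
      trivial
    | succ t ih =>
      rw [eq_top_iff, ← ih, sup_le_iff]
      refine ⟨le_sup_left, ?_⟩
      intro y hy
      rw [Submodule.restrictScalars_mem, Ideal.mem_span_singleton'] at hy
      obtain ⟨a, rfl⟩ := hy
      obtain ⟨f, rfl⟩ := Ideal.Quotient.mk_surjective a
      have hxt : (mk X)^t ∈ (Subalgebra.toSubmodule E.range) ⊔
          (Ideal.span {(mk X)^(t+1)}).restrictScalars F := by
        have h1' : c₁^t ≠ 0 := pow_ne_zero t h1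
        have : (mk X)^t = (c₁^t)⁻¹ • (r^t - (mk X)^(t+1) * mk ((u^t).divX)) := by
          rw [hdecomp t, add_sub_cancel_right, smul_smul, inv_mul_cancel₀ h1', one_smul]
        rw [this]
        refine Submodule.smul_mem _ _ (Submodule.sub_mem _ ?_ ?_)
        · exact Submodule.mem_sup_left (pow_mem hrT t)
        · refine Submodule.mem_sup_right ?_
          rw [Submodule.restrictScalars_mem]
          exact Ideal.mem_span_singleton'.mpr ⟨mk ((u^t).divX), mul_comm _ _⟩
      -- decompose mk f
      have hf : mk f * (mk X)^t = (f.coeff 0) • (mk X)^t + (mk X)^(t+1) * mk f.divX := by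
        conv_lhs => rw [show f = X * f.divX + C (f.coeff 0) from (X_mul_divX_add _).symm]
        rw [map_add, map_mul]
        have : mk (C (f.coeff 0)) = algebraMap F _ (f.coeff 0) := by
          rw [← Polynomial.algebraMap_eq, hmk, ← Ideal.Quotient.algebraMap_eq]
          exact (IsScalarTower.algebraMap_apply F F[X] (F[X] ⧸ I) _).symm
        rw [this, add_mul, ← Algebra.smul_def]
        ring_nf
      rw [hf]
      refine Submodule.add_mem _ (Submodule.smul_mem _ _ hxt) (Submodule.mem_sup_right ?_)
      rw [Submodule.restrictScalars_mem]
      exact Ideal.mem_span_singleton'.mpr ⟨mk f.divX, mul_comm _ _⟩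
  have hsurj : Function.Surjective E := by
    have hxj : (mk X)^j = 0 := by
      rw [← map_pow, hmk, Ideal.Quotient.eq_zero_iff_mem, hI]
      exact Ideal.subset_span rfl
    have := key j
    rw [hxj, Ideal.span_singleton_eq_bot.mpr rfl] at this
    rw [← AlgHom.range_eq_top, ← Algebra.toSubmodule_eq_top, ← this]
    simp
  have hinj : Function.Injective E :=
    (LinearMap.injective_iff_surjective (f := E.toLinearMap)).mpr hsurj
  refine ⟨LinearEquiv.ofBijective E.toLinearMap ⟨hinj, hsurj⟩, ?_⟩
  intro c
  obtain ⟨f, rfl⟩ := Ideal.Quotient.mk_surjective c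
  show E ((X:F[X]) • mk f) = q • E (mk f)
  rw [qt_smul, qt_smul, map_mul, E_mk, E_mk, aeval_X]

open Module in
lemma key_intertwine {V : Type} [AddCommGroup V] [Module F V] [FiniteDimensional F V]
    (N : Module.End F V) (d : ℕ) (hN : N ^ d = 0)
    (q : F[X]) (h0 : q.coeff 0 = 0) (h1 : q.coeff 1 ≠ 0) :
    ∃ e : V ≃ₗ[F] V, ∀ v, e (N v) = (Polynomial.aeval N q) (e v) := by
  classical
  have hT : Module.IsTorsion' (Module.AEval' N) (Submonoid.powers (X : F[X])) := by
    intro x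
    refine ⟨⟨X^d, ⟨d, rfl⟩⟩, ?_⟩
    show (X:F[X])^d • x = 0
    have := Module.AEval.of_symm_smul (R := F) (M := V) (a := N) ((X:F[X])^d) x
    rw [map_pow, aeval_X, hN] at this
    apply (Module.AEval'.of N).symm.injective
    simpa using this
  obtain ⟨d', k, ⟨Θ⟩⟩ := Module.torsion_by_prime_power_decomposition
    (Polynomial.irreducible_X (R := F)) hT
  -- component twists
  have hη : ∀ j : ℕ, ((F[X] ∙ (X:F[X]) ^ j) : Submodule F[X] F[X])
      = (Ideal.span {(X:F[X])^j} : Ideal F[X]) := fun j => (Ideal.submodule_span_eq).symm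
  choose τ hτ using fun i : Fin d' => cyclic_twist (F := F) (k i) q h0 h1
  set σ : ∀ i : Fin d', (F[X] ⧸ (F[X] ∙ (X:F[X]) ^ k i)) ≃ₗ[F] (F[X] ⧸ (F[X] ∙ (X:F[X]) ^ k i)) :=
    fun i => (((Submodule.quotEquivOfEq _ _ (hη (k i))).restrictScalars F).trans (τ i)).trans
      ((Submodule.quotEquivOfEq _ _ (hη (k i))).symm.restrictScalars F) with hσ
  have hσ' : ∀ (i : Fin d') (c), σ i ((X:F[X]) • c) = q • σ i c := by
    intro i c
    simp only [hσ, LinearEquiv.trans_apply, LinearEquiv.restrictScalars_apply]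
    rw [map_smul, hτ i, map_smul]
  set τD : (⨁ i : Fin d', F[X] ⧸ (F[X] ∙ (X:F[X]) ^ k i)) ≃ₗ[F]
      (⨁ i : Fin d', F[X] ⧸ (F[X] ∙ (X:F[X]) ^ k i)) := DFinsupp.mapRange.linearEquiv σ with hτD
  have hτD' : ∀ x : (⨁ i : Fin d', F[X] ⧸ (F[X] ∙ (X:F[X]) ^ k i)),
      τD ((X:F[X]) • x) = q • τD x := by
    have hcoe : ∀ (y : ⨁ i : Fin d', F[X] ⧸ (F[X] ∙ (X:F[X]) ^ k i)) (i : Fin d'),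
        τD y i = σ i (y i) := fun y i => DFinsupp.mapRange_apply _ (fun i => (σ i).map_zero) y i
    intro x
    refine DFinsupp.ext fun i => ?_
    rw [hcoe, DFinsupp.smul_apply, DFinsupp.smul_apply, hcoe, hσ']
  refine ⟨(((((Module.AEval'.of N).trans (Θ.restrictScalars F)).trans τD).trans
    (Θ.symm.restrictScalars F)).trans (Module.AEval'.of N).symm), ?_⟩
  intro v
  simp only [LinearEquiv.trans_apply, LinearEquiv.restrictScalars_apply]
  rw [← Module.AEval'.X_smul_of, map_smul, hτD', map_smul, Module.AEval.of_symm_smul]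
  rfl

lemma order_p_conj_pow (p m : ℕ) (hp : p.Prime) (hm : 0 < m) [CharP F p]
    (g : GL (Fin m) F) (hg : g ^ p = 1) (k : ℕ) (hk : ¬ p ∣ k) :
    IsConj g (g ^ k) := by
  haveI : Fact p.Prime := ⟨hp⟩
  haveI : Nonempty (Fin m) := ⟨⟨0, hm⟩⟩
  set V := Fin m → F
  set α : Matrix (Fin m) (Fin m) F ≃ₐ[F] Module.End F V := Matrix.toLinAlgEquiv' with hα
  haveI : CharP (Module.End F V) p :=
    charP_of_injective_algebraMap (algebraMap F (Module.End F V)).injective p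
  set φ : Module.End F V := α g.val with hφ
  have hφp : φ ^ p = 1 := by
    rw [hφ, ← map_pow, ← Units.val_pow_eq_pow_val, hg, Units.val_one, map_one]
  set N : Module.End F V := φ - 1 with hN
  have hNp : N ^ p = 0 := by
    rw [hN, sub_pow_char_of_commute _ (Commute.one_right φ), hφp, one_pow, sub_self]
  set q : F[X] := (1 + X)^k - 1 with hq
  have h0 : q.coeff 0 = 0 := by
    rw [hq, coeff_sub, coeff_one_add_X_pow, Nat.choose_zero_right, Nat.cast_one, coeff_one]
    simp
  have h1 : q.coeff 1 ≠ 0 := by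
    rw [hq, coeff_sub, coeff_one_add_X_pow, Nat.choose_one_right, coeff_one]
    simpa [CharP.cast_eq_zero_iff F p k] using hk
  have haeval : Polynomial.aeval N q = φ ^ k - 1 := by
    have h1φ : (1 : Module.End F V) + N = φ := by rw [hN]; abel
    rw [hq, map_sub, map_pow, map_add, map_one, aeval_X, h1φ]
  obtain ⟨e, he⟩ := key_intertwine N p hNp q h0 h1
  have hsemi : e.toLinearMap * φ = φ ^ k * e.toLinearMap := by
    apply LinearMap.ext
    intro v
    have : φ v = v + N v := by rw [hN]; simp
    show e (φ v) = (φ ^ k) (e v)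
    rw [this, map_add, he, haeval]
    simp
  -- package e as a unit of matrices
  set P : Matrix (Fin m) (Fin m) F := α.symm e.toLinearMap with hP
  have hPmul : ∀ a b : Module.End F V, α.symm a * α.symm b = α.symm (a * b) :=
    fun a b => (map_mul α.symm a b).symm
  have hee : e.toLinearMap * e.symm.toLinearMap = 1 := by
    apply LinearMap.ext; intro v; simp [Module.End.mul_apply]
  have hee' : e.symm.toLinearMap * e.toLinearMap = 1 := by
    apply LinearMap.ext; intro v; simp [Module.End.mul_apply]
  set c : GL (Fin m) F := ⟨P, α.symm e.symm.toLinearMap, by rw [hP, hPmul, hee, map_one],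
    by rw [hP, hPmul, hee', map_one]⟩ with hc
  rw [isConj_iff]
  refine ⟨c, ?_⟩
  rw [mul_inv_eq_iff_eq_mul]
  apply Units.ext
  show c.val * g.val = (g^k).val * c.val
  have : (g^k).val = g.val ^ k := by rw [Units.val_pow_eq_pow_val]
  rw [this]
  apply α.injective
  rw [map_mul, map_mul, map_pow]
  show α P * φ = φ ^ k * α P
  rw [hP, AlgEquiv.apply_symm_apply, hsemi]

lemma char_rat {G : Type} [Group G] [Fintype G] (V : FDRep ℂ G) (g : G)
    (p : ℕ) (hp : p.Prime) (hord : orderOf g = p)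
    (hconj : ∀ k : ℕ, ¬ p ∣ k → IsConj g (g ^ k)) :
    ∃ a : ℚ, (algebraMap ℚ ℂ) a = V.character g := by
  classical
  set H := Subgroup.zpowers g with hH
  have hcard : Fintype.card H = p := by rw [Fintype.card_zpowers, hord]
  haveI : Invertible ((Fintype.card H : ℂ)) := by
    refine invertibleOfNonzero ?_
    rw [hcard]
    exact_mod_cast hp.ne_zero
  set W : FDRep ℂ H := FDRep.of (V.ρ.comp H.subtype) with hW
  have hWchar : ∀ h : H, W.character h = V.character (h : G) := fun h => rfl
  have havg := FDRep.average_char_eq_finrank_invariants W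
  rw [Nat.card_eq_fintype_card, inv_mul_eq_iff_eq_mul₀ (by rw [hcard]; exact_mod_cast hp.ne_zero)] at havg
  set d : ℕ := Module.finrank ℂ (Representation.invariants W.ρ) with hd
  set dV : ℕ := Module.finrank ℂ V with hdV
  have hfin : IsOfFinOrder g := by
    rw [← orderOf_pos_iff, hord]; exact hp.pos
  have hsum : ∑ h : H, W.character h = ∑ i : Fin (orderOf g), V.character (g ^ (i:ℕ)) :=
    (Fintype.sum_equiv (finEquivZPowers hfin) _ _ (fun i => by
      rw [hWchar, finEquivZPowers_apply])).symm
  have hval : ∀ i : ℕ, 0 < i → i < p → V.character (g ^ i) = V.character g := by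
    intro i hi0 hip
    obtain ⟨c, hc⟩ := (isConj_iff).mp (hconj i (Nat.not_dvd_of_pos_of_lt hi0 hip))
    rw [← hc, FDRep.char_conj]
  have hp1 : p - 1 + 1 = p := Nat.succ_pred_eq_of_pos hp.pos
  have hsum2 : ∑ i : Fin (orderOf g), V.character (g ^ (i:ℕ))
      = ((p - 1 : ℕ) : ℂ) * V.character g + (dV : ℂ) := by
    rw [Fin.sum_univ_eq_sum_range (fun i => V.character (g ^ i)), hord, ← hp1,
      Finset.sum_range_succ']
    have hcongr : ∀ i ∈ Finset.range (p-1), V.character (g ^ (i+1)) = V.character g := by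
      intro i hi
      have := Finset.mem_range.mp hi
      exact hval (i+1) (Nat.succ_pos i) (by omega)
    rw [Finset.sum_congr rfl hcongr, Finset.sum_const, Finset.card_range, pow_zero,
      FDRep.char_one, nsmul_eq_mul, hp1]
  have key : (p : ℂ) * d = ((p-1:ℕ):ℂ) * V.character g + (dV:ℂ) := by
    rw [← hsum2, ← hsum, havg, hcard]
  have hp1C : ((p-1:ℕ):ℂ) ≠ 0 := Nat.cast_ne_zero.mpr (Nat.sub_ne_zero_of_lt hp.one_lt)
  refine ⟨((p:ℚ) * d - (dV:ℚ)) / ((p-1:ℕ):ℚ), ?_⟩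
  rw [eq_ratCast]
  push_cast [Nat.cast_sub hp.one_le]
  rw [div_eq_iff (by push_cast [Nat.cast_sub hp.one_le] at hp1C; exact hp1C)]
  push_cast [Nat.cast_sub hp.one_le] at key
  linear_combination key

end Helpers

/-- `K_p(GL_m(F_q)) = ℚ`: every irreducible character of `GL_m(F_q)`
takes rational values on elements of order `p`. -/
theorem statement3 (p n m q : ℕ) (hp : p.Prime) (hn : 1 ≤ n) (hm : 2 ≤ m)
    (hq : q = p ^ n) (F : Type) [Field F] [Fintype F] (hF : Fintype.card F = q) :
    charFieldAt (GL (Fin m) F) p = ⊥ := by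
  classical
  -- `F` has characteristic `p`
  haveI hcharF : CharP F p := by
    obtain ⟨c, hc⟩ := CharP.exists F
    obtain ⟨n', hcprime, hcard⟩ := @FiniteField.card F _ _ c hc
    have hpc : p = c := by
      have hdvd : p ∣ c ^ (n' : ℕ) := by
        rw [← hcard, hF, hq]
        exact dvd_pow_self p (by omega)
      exact (Nat.prime_dvd_prime_iff_eq hp hcprime).mp (hp.dvd_of_dvd_pow hdvd)
    rwa [hpc]
  apply le_antisymm _ bot_le
  rw [charFieldAt, IntermediateField.adjoin_le_iff]
  rintro x ⟨V, hsimp, g, hordg, rfl⟩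
  have hg1 : g ^ p = 1 := by rw [← hordg]; exact pow_orderOf_eq_one g
  have hconj : ∀ k : ℕ, ¬ p ∣ k → IsConj g (g ^ k) := fun k hk =>
    order_p_conj_pow p m hp (by omega) g hg1 k hk
  obtain ⟨a, ha⟩ := char_rat V g p hp hordg hconj
  exact (IntermediateField.mem_bot).mpr ⟨a, ha⟩
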